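/- Under the stated assumptions, for every 0 ≤ m < n one has E_P[1/η_m^{Y} | F_m] = 1 P-almost surely, where η_m^{Y}(ω) := η_m^{Y(ω)}(ω). -/

import Mathlib

open MeasureTheory Filter Set
open scoped ENNReal NNReal

/-- The conditional density `η_m^y = P[Y = y | ℱ m] / P[Y = y]` of the signal `Y`
with respect to the filtration `ℱ`. -/
noncomputable def condDensity {Ω E : Type*} {mΩ : MeasurableSpace Ω}
    (P : Measure Ω) (ℱ : ℕ → MeasurableSpace Ω) (Y : Ω → E) (m : ℕ) (y : E) : Ω → ℝ :=
  fun ω =>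
    (P[Set.indicator {ω' | Y ω' = y} (fun _ => (1 : ℝ)) | ℱ m]) ω / (P {ω' | Y ω' = y}).toReal

/-- `c * g⁻¹ * 1_S`, where `g = P[1_S | m']` and `c = (P S).toReal`. -/
noncomputable def hAux {Ω : Type*} (m' : MeasurableSpace Ω) [mΩ : MeasurableSpace Ω]
    (P : Measure Ω) (S : Set Ω) : Ω → ℝ :=
  fun ω => ((P S).toReal * ((P[S.indicator (fun _ => (1 : ℝ)) | m']) ω)⁻¹) *
    S.indicator (fun _ => (1 : ℝ)) ω

/-- Nonnegative version of `hAux`. -/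
noncomputable def hAuxPos {Ω : Type*} (m' : MeasurableSpace Ω) [mΩ : MeasurableSpace Ω]
    (P : Measure Ω) (S : Set Ω) : Ω → ℝ :=
  fun ω => max ((P S).toReal * ((P[S.indicator (fun _ => (1 : ℝ)) | m']) ω)⁻¹) 0 *
    S.indicator (fun _ => (1 : ℝ)) ω

lemma hAuxPos_nonneg {Ω : Type*} (m' : MeasurableSpace Ω) {mΩ : MeasurableSpace Ω}
    (P : Measure Ω) (S : Set Ω) (ω : Ω) : 0 ≤ hAuxPos m' P S ω :=
  mul_nonneg (le_max_right _ _) (Set.indicator_nonneg (fun _ _ => zero_le_one) ω)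

lemma key {Ω : Type*} {m' : MeasurableSpace Ω} {mΩ : MeasurableSpace Ω}
    (P : Measure Ω) [IsProbabilityMeasure P] (hm' : m' ≤ mΩ) {S : Set Ω} (hS : MeasurableSet S)
    (hgpos : ∀ᵐ ω ∂P, 0 < (P[S.indicator (fun _ => (1 : ℝ)) | m']) ω) :
    Integrable (hAux m' P S) P ∧ (hAux m' P S =ᵐ[P] hAuxPos m' P S) ∧
      (∫⁻ ω, ENNReal.ofReal (hAuxPos m' P S ω) ∂P) ≤ P S ∧
      ∀ s : Set Ω, MeasurableSet[m'] s →
        ∫ ω in s, hAux m' P S ω ∂P = (P S).toReal * (P s).toReal := by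
  set Ifun : Ω → ℝ := S.indicator (fun _ => (1 : ℝ)) with hIfun
  set g : Ω → ℝ := P[Ifun | m'] with hgdef
  set c : ℝ := (P S).toReal with hcdef
  have hc0 : 0 ≤ c := ENNReal.toReal_nonneg
  have hI_int : Integrable Ifun P := (integrable_const (1 : ℝ)).indicator hS
  have hgsm : StronglyMeasurable[m'] g := stronglyMeasurable_condExp
  have hg_meas : Measurable[m'] g := hgsm.measurable
  have hgint : Integrable g P := integrable_condExp
  have hf_meas : Measurable[m'] (fun ω => c * (g ω)⁻¹) := hg_meas.inv.const_mul c
  -- truncations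
  set t : ℕ → Ω → ℝ := fun k ω => min (max (c * (g ω)⁻¹) 0) (k : ℝ) with htdef
  have ht_meas : ∀ k, Measurable[m'] (t k) :=
    fun k => (hf_meas.max measurable_const).min measurable_const
  have ht_nonneg : ∀ k ω, 0 ≤ t k ω := fun k ω => le_min (le_max_right _ _) (Nat.cast_nonneg k)
  have ht_bd : ∀ k : ℕ, ∀ ω, ‖t k ω‖ ≤ (k : ℝ) := by
    intro k ω
    rw [Real.norm_eq_abs, abs_of_nonneg (ht_nonneg k ω)]
    exact min_le_right _ _
  have htI_int : ∀ k, Integrable (t k * Ifun) P := fun k =>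
    hI_int.bdd_mul ((ht_meas k).mono hm' le_rfl).stronglyMeasurable.aestronglyMeasurable
      (ae_of_all _ (ht_bd k))
  have htg_int : ∀ k, Integrable (t k * g) P := fun k =>
    hgint.bdd_mul ((ht_meas k).mono hm' le_rfl).stronglyMeasurable.aestronglyMeasurable
      (ae_of_all _ (ht_bd k))
  have hpull : ∀ k, P[t k * Ifun | m'] =ᵐ[P] t k * g := fun k =>
    condExp_mul_of_stronglyMeasurable_left ((ht_meas k).stronglyMeasurable) (htI_int k) hI_int
  have hbd1 : ∀ k, (t k * g) ≤ᵐ[P] fun _ => c := by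
    intro k
    filter_upwards [hgpos] with ω hω
    have hfnn : 0 ≤ c * (g ω)⁻¹ := mul_nonneg hc0 (inv_nonneg.2 hω.le)
    have h1 : t k ω ≤ c * (g ω)⁻¹ := (min_le_left _ _).trans (le_of_eq (max_eq_left hfnn))
    calc t k ω * g ω ≤ c * (g ω)⁻¹ * g ω := mul_le_mul_of_nonneg_right h1 hω.le
      _ = c := by rw [mul_assoc, inv_mul_cancel₀ hω.ne', mul_one]
  have hint_le : ∀ k, ∫ ω, (t k * Ifun) ω ∂P ≤ c := by
    intro k
    have h1 : ∫ ω, (t k * Ifun) ω ∂P = ∫ ω, (t k * g) ω ∂P := by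
      rw [← integral_condExp hm']
      exact integral_congr_ae (hpull k)
    rw [h1]
    calc ∫ ω, (t k * g) ω ∂P ≤ ∫ _, c ∂P := integral_mono_ae (htg_int k) (integrable_const c) (hbd1 k)
      _ = c := by simp
  have htI_nonneg : ∀ k ω, 0 ≤ (t k * Ifun) ω := fun k ω =>
    mul_nonneg (ht_nonneg k ω) (Set.indicator_nonneg (fun _ _ => zero_le_one) ω)
  have hlin : ∀ k, ∫⁻ ω, ENNReal.ofReal ((t k * Ifun) ω) ∂P ≤ ENNReal.ofReal c := by
    intro k
    rw [← ofReal_integral_eq_lintegral_ofReal (htI_int k) (ae_of_all _ (htI_nonneg k))]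
    exact ENNReal.ofReal_le_ofReal (hint_le k)
  have hImeas : Measurable Ifun := measurable_const.indicator hS
  have hsup : ∀ ω, (⨆ k : ℕ, ENNReal.ofReal ((t k * Ifun) ω)) = ENNReal.ofReal (hAuxPos m' P S ω) := by
    intro ω
    set M : ℝ := max (c * (g ω)⁻¹) 0 with hM
    have hIω : 0 ≤ Ifun ω := Set.indicator_nonneg (fun _ _ => zero_le_one) ω
    apply le_antisymm
    · refine iSup_le fun k => ENNReal.ofReal_le_ofReal ?_
      exact mul_le_mul_of_nonneg_right (min_le_left _ _) hIω
    · refine le_iSup_of_le ⌈M⌉₊ (le_of_eq ?_)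
      congr 1
      show M * Ifun ω = min M (⌈M⌉₊ : ℝ) * Ifun ω
      rw [min_eq_left (Nat.le_ceil M)]
  have hsup_lint : ∫⁻ ω, ENNReal.ofReal (hAuxPos m' P S ω) ∂P ≤ P S := by
    have hmono : ∀ᵐ ω ∂P, Monotone fun k : ℕ => ENNReal.ofReal ((t k * Ifun) ω) := by
      refine ae_of_all _ fun ω k l hkl => ENNReal.ofReal_le_ofReal ?_
      have hIω : 0 ≤ Ifun ω := Set.indicator_nonneg (fun _ _ => zero_le_one) ω
      exact mul_le_mul_of_nonneg_right (min_le_min le_rfl (Nat.cast_le.2 hkl)) hIω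
    have hmeas : ∀ k : ℕ, AEMeasurable (fun ω => ENNReal.ofReal ((t k * Ifun) ω)) P :=
      fun k => ((((ht_meas k).mono hm' le_rfl).mul hImeas).ennreal_ofReal).aemeasurable
    calc ∫⁻ ω, ENNReal.ofReal (hAuxPos m' P S ω) ∂P
        = ∫⁻ ω, ⨆ k : ℕ, ENNReal.ofReal ((t k * Ifun) ω) ∂P := by
          refine lintegral_congr fun ω => (hsup ω).symm
      _ = ⨆ k : ℕ, ∫⁻ ω, ENNReal.ofReal ((t k * Ifun) ω) ∂P := lintegral_iSup' hmeas hmono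
      _ ≤ ENNReal.ofReal c := iSup_le hlin
      _ = P S := ENNReal.ofReal_toReal (measure_ne_top P S)
  have haux_eq : hAux m' P S =ᵐ[P] hAuxPos m' P S := by
    filter_upwards [hgpos] with ω hω
    have hfnn : 0 ≤ c * (g ω)⁻¹ := mul_nonneg hc0 (inv_nonneg.2 hω.le)
    show c * (g ω)⁻¹ * Ifun ω = max (c * (g ω)⁻¹) 0 * Ifun ω
    rw [max_eq_left hfnn]
  have hAuxPos_meas : Measurable (hAuxPos m' P S) :=
    (((hg_meas.inv.const_mul c).mono hm' le_rfl).max measurable_const).mul hImeas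
  have hAuxPos_int : Integrable (hAuxPos m' P S) P := by
    refine ⟨hAuxPos_meas.aestronglyMeasurable, ?_⟩
    rw [hasFiniteIntegral_iff_ofReal (ae_of_all _ (hAuxPos_nonneg m' P S))]
    exact lt_of_le_of_lt hsup_lint (measure_lt_top P S)
  have hAux_int : Integrable (hAux m' P S) P := hAuxPos_int.congr haux_eq.symm
  have hAux_eq_mul : hAux m' P S = (fun ω => c * (g ω)⁻¹) * Ifun := rfl
  have hpull2 : P[hAux m' P S | m'] =ᵐ[P] (fun ω => c * (g ω)⁻¹) * g := by
    rw [hAux_eq_mul]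
    exact condExp_mul_of_stronglyMeasurable_left hf_meas.stronglyMeasurable
      (hAux_eq_mul ▸ hAux_int) hI_int
  have hconst : P[hAux m' P S | m'] =ᵐ[P] fun _ => c := by
    refine hpull2.trans ?_
    filter_upwards [hgpos] with ω hω
    show c * (g ω)⁻¹ * g ω = c
    rw [mul_assoc, inv_mul_cancel₀ hω.ne', mul_one]
  refine ⟨hAux_int, haux_eq, hsup_lint, fun s hs => ?_⟩
  rw [← setIntegral_condExp hm' hAux_int hs]
  calc ∫ ω in s, (P[hAux m' P S | m']) ω ∂P = ∫ _ in s, c ∂P :=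
        integral_congr_ae (ae_restrict_of_ae hconst)
    _ = (P s).toReal • c := by rw [setIntegral_const, Measure.real_def]
    _ = c * (P s).toReal := by rw [smul_eq_mul, mul_comm]

theorem stmt1 {Ω E : Type*} {mΩ : MeasurableSpace Ω} [Countable E]
    (P : Measure Ω) [IsProbabilityMeasure P] (n : ℕ)
    (ℱ : ℕ → MeasurableSpace Ω) (hmono : Monotone ℱ) (hle : ∀ m, ℱ m ≤ mΩ)
    (Y : Ω → E) (hY : @Measurable Ω E (ℱ n) ⊤ Y)
    (hYpos : ∀ y ∈ Set.range Y, 0 < P {ω | Y ω = y})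
    (hη : ∀ m, m < n → ∀ y ∈ Set.range Y, ∀ᵐ ω ∂P, 0 < condDensity P ℱ Y m y ω) :
    ∀ m, m < n →
      P[fun ω => (condDensity P ℱ Y m (Y ω) ω)⁻¹ | ℱ m]
        =ᵐ[P] fun _ => (1 : ℝ) := by
  intro m hm
  letI : MeasurableSpace E := ⊤
  haveI : MeasurableSingletonClass E := ⟨fun _ => trivial⟩
  set S : E → Set Ω := fun y => {ω' | Y ω' = y} with hSdef
  have hSmeas : ∀ y, MeasurableSet (S y) := fun y =>
    hle n _ (hY (show MeasurableSet[⊤] {y} from trivial))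
  have hYm : Measurable Y := hY.mono (hle n) le_rfl
  have hg_meas : ∀ y : E, Measurable
      (P[(S y).indicator (fun _ => (1 : ℝ)) | ℱ m]) := fun y =>
    (stronglyMeasurable_condExp.measurable).mono (hle m) le_rfl
  have hF_eq : ∀ ω, (condDensity P ℱ Y m (Y ω) ω)⁻¹ = hAux (ℱ m) P (S (Y ω)) ω := by
    intro ω
    show ((P[(S (Y ω)).indicator (fun _ => (1 : ℝ)) | ℱ m]) ω / (P (S (Y ω))).toReal)⁻¹ = _
    rw [inv_div]
    show _ = (P (S (Y ω))).toReal * ((P[(S (Y ω)).indicator (fun _ => (1 : ℝ)) | ℱ m]) ω)⁻¹ *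
      (S (Y ω)).indicator (fun _ => (1 : ℝ)) ω
    rw [Set.indicator_of_mem (show ω ∈ S (Y ω) from rfl), mul_one, div_eq_mul_inv]
  have hkey : ∀ y : E, Integrable (hAux (ℱ m) P (S y)) P ∧
      (hAux (ℱ m) P (S y) =ᵐ[P] hAuxPos (ℱ m) P (S y)) ∧
      (∫⁻ ω, ENNReal.ofReal (hAuxPos (ℱ m) P (S y) ω) ∂P) ≤ P (S y) ∧
      ∀ s : Set Ω, MeasurableSet[ℱ m] s →
        ∫ ω in s, hAux (ℱ m) P (S y) ω ∂P = (P (S y)).toReal * (P s).toReal := by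
    intro y
    by_cases hy : y ∈ Set.range Y
    · refine key P (hle m) (hSmeas y) ?_
      have hcpos : 0 < (P (S y)).toReal :=
        ENNReal.toReal_pos (hYpos y hy).ne' (measure_ne_top P (S y))
      filter_upwards [hη m hm y hy] with ω hω
      have := hω
      rw [show condDensity P ℱ Y m y ω =
        (P[(S y).indicator (fun _ => (1 : ℝ)) | ℱ m]) ω / (P (S y)).toReal from rfl] at this
      rcases div_pos_iff.mp this with ⟨h1, _⟩ | ⟨_, h2⟩
      · exact h1
      · exact absurd hcpos (by linarith)
    · have hempty : S y = ∅ := Set.eq_empty_iff_forall_notMem.2 fun ω hω => hy ⟨ω, hω⟩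
      have h0 : hAux (ℱ m) P (S y) = fun _ => 0 := by
        funext ω; show _ * (S y).indicator _ ω = 0
        rw [hempty, Set.indicator_empty, mul_zero]
      have h0' : hAuxPos (ℱ m) P (S y) = fun _ => 0 := by
        funext ω; show _ * (S y).indicator _ ω = 0
        rw [hempty, Set.indicator_empty, mul_zero]
      refine ⟨h0 ▸ integrable_const 0, ?_, ?_, fun s hs => ?_⟩
      · rw [h0, h0']
      · rw [h0']; simp
      · rw [h0]; simp [hempty]
  have hae_all : ∀ᵐ ω ∂P, ∀ y, hAux (ℱ m) P (S y) ω = hAuxPos (ℱ m) P (S y) ω :=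
    (ae_all_iff).mpr fun y => (hkey y).2.1
  -- measurability of F
  have hFmeas : Measurable fun ω => (condDensity P ℱ Y m (Y ω) ω)⁻¹ := by
    have hcomp : (fun ω => (condDensity P ℱ Y m (Y ω) ω)⁻¹) =
        (fun p : Ω × E => (condDensity P ℱ Y m p.2 p.1)⁻¹) ∘ fun ω => (ω, Y ω) := rfl
    rw [hcomp]
    refine Measurable.comp (measurable_from_prod_countable_left fun y => ?_) (measurable_id.prodMk hYm)
    show Measurable fun x => ((P[(S y).indicator (fun _ => (1 : ℝ)) | ℱ m]) x / (P (S y)).toReal)⁻¹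
    exact ((hg_meas y).div_const _).inv
  have hauxpos_meas : ∀ y : E, Measurable fun ω => ENNReal.ofReal (hAuxPos (ℱ m) P (S y) ω) :=
    fun y => ((((hg_meas y).inv.const_mul _).max measurable_const).mul
      (measurable_const.indicator (hSmeas y))).ennreal_ofReal
  have hsum_one : (∑' y : E, P (S y)) = 1 := by
    have hdisj : Pairwise (Function.onFun Disjoint S) := by
      intro y y' hne
      refine Set.disjoint_left.2 fun ω hω hω' => hne ?_
      exact hω.symm.trans hω'
    have hunion : (⋃ y, S y) = Set.univ :=
      Set.eq_univ_of_forall fun ω => Set.mem_iUnion.2 ⟨Y ω, rfl⟩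
    have h := measure_iUnion (μ := P) hdisj hSmeas
    rw [hunion, measure_univ] at h
    exact h.symm
  have hF_nonneg : ∀ᵐ ω ∂P, 0 ≤ (condDensity P ℱ Y m (Y ω) ω)⁻¹ := by
    filter_upwards [hae_all] with ω hω
    rw [hF_eq ω, hω (Y ω)]
    exact hAuxPos_nonneg _ _ _ _
  have hpt : ∀ᵐ ω ∂P, ENNReal.ofReal ((condDensity P ℱ Y m (Y ω) ω)⁻¹) =
      ∑' y : E, ENNReal.ofReal (hAuxPos (ℱ m) P (S y) ω) := by
    filter_upwards [hae_all] with ω hω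
    rw [hF_eq ω, hω (Y ω)]
    symm
    refine tsum_eq_single (Y ω) fun y hy => ?_
    have hnot : ω ∉ S y := fun h => hy h.symm
    have : hAuxPos (ℱ m) P (S y) ω = 0 := by
      show _ * (S y).indicator _ ω = 0
      rw [Set.indicator_of_notMem hnot, mul_zero]
    rw [this, ENNReal.ofReal_zero]
  have hlint_le : ∫⁻ ω, ENNReal.ofReal ((condDensity P ℱ Y m (Y ω) ω)⁻¹) ∂P ≤ 1 := by
    rw [lintegral_congr_ae hpt, lintegral_tsum fun y => (hauxpos_meas y).aemeasurable]
    calc (∑' y : E, ∫⁻ ω, ENNReal.ofReal (hAuxPos (ℱ m) P (S y) ω) ∂P)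
        ≤ ∑' y : E, P (S y) := ENNReal.tsum_le_tsum fun y => (hkey y).2.2.1
      _ = 1 := hsum_one
  have hFint : Integrable (fun ω => (condDensity P ℱ Y m (Y ω) ω)⁻¹) P := by
    refine ⟨hFmeas.aestronglyMeasurable, ?_⟩
    rw [hasFiniteIntegral_iff_ofReal hF_nonneg]
    exact lt_of_le_of_lt hlint_le ENNReal.one_lt_top
  -- set-integral identity
  have hFsum : ∀ ω, (condDensity P ℱ Y m (Y ω) ω)⁻¹ = ∑' y : E, hAux (ℱ m) P (S y) ω := by
    intro ω
    rw [hF_eq ω]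
    symm
    refine tsum_eq_single (Y ω) fun y hy => ?_
    have hnot : ω ∉ S y := fun h => hy h.symm
    show _ * (S y).indicator _ ω = 0
    rw [Set.indicator_of_notMem hnot, mul_zero]
  have hAux_lint_le : ∀ y : E, (∫⁻ ω, ‖hAux (ℱ m) P (S y) ω‖₊ ∂P) ≤ P (S y) := by
    intro y
    have : ∫⁻ ω, (‖hAux (ℱ m) P (S y) ω‖₊ : ℝ≥0∞) ∂P
        = ∫⁻ ω, ENNReal.ofReal (hAuxPos (ℱ m) P (S y) ω) ∂P := by
      refine lintegral_congr_ae ?_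
      filter_upwards [(hkey y).2.1] with ω hω
      rw [hω]; exact Real.enorm_eq_ofReal (hAuxPos_nonneg _ _ _ _)
    rw [this]
    exact (hkey y).2.2.1
  have hAux_meas : ∀ y : E, Measurable (hAux (ℱ m) P (S y)) := fun y =>
    ((hg_meas y).inv.const_mul _).mul (measurable_const.indicator (hSmeas y))
  have hsetInt : ∀ s : Set Ω, MeasurableSet[ℱ m] s →
      ∫ ω in s, (condDensity P ℱ Y m (Y ω) ω)⁻¹ ∂P = (P s).toReal := by
    intro s hs
    have h1 : ∫ ω in s, (condDensity P ℱ Y m (Y ω) ω)⁻¹ ∂P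
        = ∫ ω in s, ∑' y : E, hAux (ℱ m) P (S y) ω ∂P := by
      refine integral_congr_ae (ae_of_all _ hFsum)
    rw [h1]
    have h2 : (∑' y : E, ∫⁻ ω in s, ‖hAux (ℱ m) P (S y) ω‖₊ ∂P) ≠ ⊤ := by
      refine ne_top_of_le_ne_top ENNReal.one_ne_top ?_
      calc (∑' y : E, ∫⁻ ω in s, ‖hAux (ℱ m) P (S y) ω‖₊ ∂P)
          ≤ ∑' y : E, ∫⁻ ω, ‖hAux (ℱ m) P (S y) ω‖₊ ∂P :=
            ENNReal.tsum_le_tsum fun y =>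
              lintegral_mono' Measure.restrict_le_self le_rfl
        _ ≤ ∑' y : E, P (S y) := ENNReal.tsum_le_tsum hAux_lint_le
        _ = 1 := hsum_one
    rw [integral_tsum (fun y => (hAux_meas y).aestronglyMeasurable.restrict) h2]
    have h3 : ∀ y : E, ∫ ω in s, hAux (ℱ m) P (S y) ω ∂P = (P (S y)).toReal * (P s).toReal :=
      fun y => (hkey y).2.2.2 s hs
    calc (∑' y : E, ∫ ω in s, hAux (ℱ m) P (S y) ω ∂P)
        = ∑' y : E, (P (S y)).toReal * (P s).toReal := by
          exact tsum_congr h3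
      _ = (∑' y : E, (P (S y)).toReal) * (P s).toReal := tsum_mul_right
      _ = (P s).toReal := by
          rw [← ENNReal.tsum_toReal_eq fun y => measure_ne_top P (S y), hsum_one,
            ENNReal.toReal_one, one_mul]
  refine (ae_eq_condExp_of_forall_setIntegral_eq (hle m) hFint
    (fun s _ _ => (integrable_const (1 : ℝ)).integrableOn)
    (fun s hs _ => ?_) aestronglyMeasurable_const).symm
  rw [hsetInt s hs, setIntegral_const, Measure.real_def, smul_eq_mul, mul_one]
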